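/- Let F(w) = (1/2) Σ_c (a_c − v_c − Σ_j w_j H_{jc})², a quadratic in w ∈ ℝ^r. Let w^t ∈ ℝ^r have strictly positive entries, and let K be the diagonal matrix with K_{aa} = ((w^t H H^T)_a + (v^T H^T)_a)/w^t_a, where v, a have nonnegative entries and H has nonnegative entries. Then G(w, w^t) = F(w^t) + (w − w^t)·∇F(w^t) + (1/2)(w − w^t)^T K (w − w^t) satisfies G(w, w^t) ≥ F(w) for all w and G(w^t, w^t) = F(w^t), i.e., G is an auxiliary function for F. -/

import Mathlib

open Matrix

lemma sym_quad_nonneg {r : ℕ} (m : Fin r → Fin r → ℝ) (hm : ∀ i j, 0 ≤ m i j)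
    (hsym : ∀ i j, m i j = m j i) (x : Fin r → ℝ) :
    0 ≤ ∑ b, ∑ j, m j b * (x b ^ 2 - x b * x j) := by
  have hswap : ∑ b, ∑ j, m j b * (x j ^ 2 - x b * x j)
      = ∑ b, ∑ j, m j b * (x b ^ 2 - x b * x j) := by
    rw [Finset.sum_comm]
    refine Finset.sum_congr rfl fun b _ => Finset.sum_congr rfl fun j _ => ?_
    rw [hsym]; ring
  have hsum : ∑ b, ∑ j, m j b * (x b - x j) ^ 2
      = (∑ b, ∑ j, m j b * (x b ^ 2 - x b * x j))
        + ∑ b, ∑ j, m j b * (x j ^ 2 - x b * x j) := by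
    rw [← Finset.sum_add_distrib]
    refine Finset.sum_congr rfl fun b _ => ?_
    rw [← Finset.sum_add_distrib]
    exact Finset.sum_congr rfl fun j _ => by ring
  have hnn : 0 ≤ ∑ b, ∑ j, m j b * (x b - x j) ^ 2 :=
    Finset.sum_nonneg fun b _ => Finset.sum_nonneg fun j _ =>
      mul_nonneg (hm _ _) (sq_nonneg _)
  rw [hsum, hswap] at hnn
  linarith

/-- `F(w) = (1/2) Σ_c (a_c - v_c - Σ_j w_j H_{jc})²`. -/
noncomputable def F3 {r n : ℕ} (a v : Fin n → ℝ) (H : Matrix (Fin r) (Fin n) ℝ)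
    (w : Fin r → ℝ) : ℝ :=
  (1 / 2) * ∑ c, (a c - v c - ∑ j, w j * H j c) ^ 2

/-- The gradient of `F3`: `(∇F(w))_b = -Σ_c (a_c - v_c - Σ_j w_j H_{jc}) H_{bc}`. -/
noncomputable def gradF3 {r n : ℕ} (a v : Fin n → ℝ) (H : Matrix (Fin r) (Fin n) ℝ)
    (w : Fin r → ℝ) (b : Fin r) : ℝ :=
  -∑ c, (a c - v c - ∑ j, w j * H j c) * H b c

/-- With `K_{aa} = ((wᵗ H Hᵀ)_a + (vᵀ Hᵀ)_a)/wᵗ_a`, the quadratic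
`G(w, wᵗ) = F(wᵗ) + (w - wᵗ)·∇F(wᵗ) + (1/2)(w - wᵗ)ᵀ K (w - wᵗ)` is an
auxiliary function for `F`. -/
theorem stmt_3 {r n : ℕ} (a v : Fin n → ℝ) (ha : ∀ c, 0 ≤ a c) (hv : ∀ c, 0 ≤ v c)
    (H : Matrix (Fin r) (Fin n) ℝ) (hH : ∀ i j, 0 ≤ H i j)
    (wt : Fin r → ℝ) (hwt : ∀ b, 0 < wt b)
    (K : Fin r → ℝ)
    (hK : ∀ b, K b = ((wt ᵥ* (H * Hᵀ)) b + (v ᵥ* Hᵀ) b) / wt b)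
    (G : (Fin r → ℝ) → (Fin r → ℝ) → ℝ)
    (hG : ∀ w w', G w w' = F3 a v H w' + (∑ b, (w b - w' b) * gradF3 a v H w' b)
      + (1 / 2) * ∑ b, K b * (w b - w' b) ^ 2) :
    (∀ w, F3 a v H w ≤ G w wt) ∧ G wt wt = F3 a v H wt := by
  set M : Fin r → Fin r → ℝ := fun j b => ∑ c, H j c * H b c with hM
  set P : Fin r → ℝ := fun b => ∑ c, v c * H b c with hP
  have hMnn : ∀ i j, 0 ≤ M i j := fun i j =>
    Finset.sum_nonneg fun c _ => mul_nonneg (hH _ _) (hH _ _)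
  have hMsym : ∀ i j, M i j = M j i := fun i j =>
    Finset.sum_congr rfl fun c _ => mul_comm _ _
  have hPnn : ∀ b, 0 ≤ P b := fun b =>
    Finset.sum_nonneg fun c _ => mul_nonneg (hv _) (hH _ _)
  have hKval : ∀ b, K b = ((∑ j, wt j * M j b) + P b) / wt b := by
    intro b
    rw [hK]
    congr 1
  constructor
  · intro w
    set d : Fin r → ℝ := fun b => w b - wt b with hd
    set X : Fin n → ℝ := fun c => a c - v c - ∑ j, wt j * H j c with hX
    set S : Fin n → ℝ := fun c => ∑ j, d j * H j c with hS
    -- gradient term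
    have hgrad : ∑ b, d b * gradF3 a v H wt b = -∑ c, X c * S c := by
      have h1 : ∀ b, d b * gradF3 a v H wt b = ∑ c, -(X c * (d b * H b c)) := by
        intro b
        unfold gradF3
        rw [mul_neg, Finset.mul_sum, ← Finset.sum_neg_distrib]
        exact Finset.sum_congr rfl fun c _ => by simp only [hX]; ring
      simp_rw [h1]
      rw [Finset.sum_comm, ← Finset.sum_neg_distrib]
      refine Finset.sum_congr rfl fun c _ => ?_
      simp only [hS, Finset.mul_sum]
      rw [← Finset.sum_neg_distrib]
    -- quadratic expansion
    have hexp : F3 a v H w = F3 a v H wt + (∑ b, d b * gradF3 a v H wt b)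
        + (1 / 2) * ∑ c, S c ^ 2 := by
      have hw : ∀ c, a c - v c - ∑ j, w j * H j c = X c - S c := by
        intro c
        have h2 : ∑ j, d j * H j c = (∑ j, w j * H j c) - ∑ j, wt j * H j c := by
          rw [← Finset.sum_sub_distrib]
          exact Finset.sum_congr rfl fun j _ => by simp only [hd]; ring
        simp only [hX, hS]
        rw [h2]; ring
      have hsplit : ∑ c, (X c - S c) ^ 2
          = (∑ c, X c ^ 2) - 2 * (∑ c, X c * S c) + ∑ c, S c ^ 2 := by
        have h3 : ∑ c, (X c - S c) ^ 2
            = ∑ c, (X c ^ 2 - 2 * (X c * S c) + S c ^ 2) :=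
          Finset.sum_congr rfl fun c _ => by ring
        rw [h3, Finset.sum_add_distrib, Finset.sum_sub_distrib, ← Finset.mul_sum]
      have hF3w : F3 a v H w = (1 / 2) * ∑ c, (X c - S c) ^ 2 := by
        unfold F3
        congr 1
        exact Finset.sum_congr rfl fun c _ => by rw [hw c]
      have hF3wt : F3 a v H wt = (1 / 2) * ∑ c, X c ^ 2 := by
        unfold F3
        congr 1
      rw [hF3w, hsplit, hF3wt, hgrad]
      ring
    -- S² as a double sum over M
    have hS2 : ∑ c, S c ^ 2 = ∑ b, ∑ j, M j b * (d b * d j) := by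
      simp_rw [hS, sq, Finset.sum_mul_sum]
      rw [Finset.sum_comm]
      refine Finset.sum_congr rfl fun b _ => ?_
      rw [Finset.sum_comm]
      refine Finset.sum_congr rfl fun j _ => ?_
      rw [hM]
      simp only [Finset.sum_mul]
      exact Finset.sum_congr rfl fun c _ => by ring
    -- the key inequality
    have hKd : ∑ b, ∑ j, M j b * (d b * d j) ≤ ∑ b, K b * d b ^ 2 := by
      set m : Fin r → Fin r → ℝ := fun j b => M j b * wt j * wt b with hm
      set x : Fin r → ℝ := fun b => d b / wt b with hx
      have hmnn : ∀ i j, 0 ≤ m i j := fun i j =>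
        mul_nonneg (mul_nonneg (hMnn _ _) (hwt _).le) (hwt _).le
      have hmsym : ∀ i j, m i j = m j i := by
        intro i j; simp only [hm]; rw [hMsym]; ring
      have hKb : ∀ b, K b * d b ^ 2
          = (∑ j, m j b * x b ^ 2) + P b * d b ^ 2 / wt b := by
        intro b
        have hb : wt b ≠ 0 := (hwt b).ne'
        rw [hKval b, div_mul_eq_mul_div, add_mul, Finset.sum_mul, add_div,
          Finset.sum_div]
        congr 1
        refine Finset.sum_congr rfl fun j _ => ?_
        simp only [hm, hx]
        field_simp
      have hcross : ∀ b j, M j b * (d b * d j) = m j b * (x b * x j) := by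
        intro b j
        have hb : wt b ≠ 0 := (hwt b).ne'
        have hj : wt j ≠ 0 := (hwt j).ne'
        simp only [hm, hx]
        field_simp
      have hpos : 0 ≤ ∑ b, ∑ j, m j b * (x b ^ 2 - x b * x j) :=
        sym_quad_nonneg m hmnn hmsym x
      have hPterm : 0 ≤ ∑ b, P b * d b ^ 2 / wt b :=
        Finset.sum_nonneg fun b _ =>
          div_nonneg (mul_nonneg (hPnn b) (sq_nonneg _)) (hwt b).le
      have hdiff : (∑ b, K b * d b ^ 2) - ∑ b, ∑ j, M j b * (d b * d j)
          = (∑ b, ∑ j, m j b * (x b ^ 2 - x b * x j)) + ∑ b, P b * d b ^ 2 / wt b := by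
        rw [← Finset.sum_sub_distrib, ← Finset.sum_add_distrib]
        refine Finset.sum_congr rfl fun b _ => ?_
        rw [hKb b]
        simp_rw [hcross b]
        rw [add_sub_right_comm, ← Finset.sum_sub_distrib]
        congr 1
        exact Finset.sum_congr rfl fun j _ => by ring
      linarith
    rw [hG]
    show F3 a v H w ≤ F3 a v H wt + (∑ b, d b * gradF3 a v H wt b)
      + (1 / 2) * ∑ b, K b * d b ^ 2
    rw [hexp]
    linarith [hKd, hS2.le, hS2.ge]
  · rw [hG]
    simp [F3]
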